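/- Let ε > 0 and let g : ℝ → [0,1] be any measurable function (interpreted as a randomized test, g(x) being the probability of outputting 1 on observation x). Then ∫ g dN(ε,1) − ∫ g dN(0,1) ≤ ε/√2. In words: the probability that a randomized police test arrests a sender of the message ε exceeds the probability that it arrests a sender of the message 0 by at most ε/√2. -/

import Mathlib

open MeasureTheory ProbabilityTheory Real
open scoped ENNReal NNReal

lemma integral_gaussianReal_eq (μ : ℝ) (g : ℝ → ℝ) :
    (∫ x, g x ∂(gaussianReal μ 1)) = ∫ x, g x * gaussianPDFReal μ 1 x := by
  rw [gaussianReal_of_var_ne_zero μ one_ne_zero]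
  have h : gaussianPDF μ 1 = fun x => ((gaussianPDFReal μ 1 x).toNNReal : ℝ≥0∞) := by
    funext x; rfl
  rw [h, integral_withDensity_eq_integral_smul
    ((measurable_gaussianPDFReal μ 1).real_toNNReal)]
  congr 1; funext x
  simp only [NNReal.smul_def, smul_eq_mul]
  rw [Real.coe_toNNReal _ (gaussianPDFReal_nonneg μ 1 x), mul_comm]

lemma integrable_mul_gaussianPDFReal (μ : ℝ) (g : ℝ → ℝ) (hg : Measurable g)
    (hg0 : ∀ x, 0 ≤ g x) (hg1 : ∀ x, g x ≤ 1) :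
    Integrable (fun x => g x * gaussianPDFReal μ 1 x) := by
  refine (integrable_gaussianPDFReal μ 1).mono
    ((hg.mul (measurable_gaussianPDFReal μ 1)).aestronglyMeasurable) ?_
  refine Filter.Eventually.of_forall fun x => ?_
  have h0 := gaussianPDFReal_nonneg μ 1 x
  rw [Real.norm_eq_abs, Real.norm_eq_abs, abs_of_nonneg (mul_nonneg (hg0 x) h0),
    abs_of_nonneg h0]
  nlinarith [hg0 x, hg1 x]

/-- Randomized tests cannot distinguish `N(ε,1)` from `N(0,1)` by more than `ε/√2`:
for any measurable `g : ℝ → [0,1]`, the difference between the probability that the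
randomized test outputs 1 under `N(ε,1)` and under `N(0,1)` is at most `ε/√2`. -/
theorem randomized_test_diff_le (ε : ℝ) (hε : 0 < ε) (g : ℝ → ℝ) (hg : Measurable g)
    (hg0 : ∀ x, 0 ≤ g x) (hg1 : ∀ x, g x ≤ 1) :
    (∫ x, g x ∂(gaussianReal ε 1)) - (∫ x, g x ∂(gaussianReal 0 1)) ≤ ε / Real.sqrt 2 := by
  set f : ℝ → ℝ → ℝ := fun μ x => gaussianPDFReal μ 1 x with hf
  rw [integral_gaussianReal_eq, integral_gaussianReal_eq]
  have hInt : ∀ μ : ℝ, Integrable (fun x => g x * f μ x) := fun μ =>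
    integrable_mul_gaussianPDFReal μ g hg hg0 hg1
  -- difference as one integral
  rw [← integral_sub (hInt ε) (hInt 0)]
  have hle : ∀ x, x ≤ ε / 2 → f ε x ≤ f 0 x := by
    intro x hx
    simp only [hf, gaussianPDFReal, NNReal.coe_one, mul_one]
    refine mul_le_mul_of_nonneg_left (Real.exp_le_exp.mpr ?_) (by positivity)
    nlinarith
  have hge : ∀ x, ε / 2 ≤ x → f 0 x ≤ f ε x := by
    intro x hx
    simp only [hf, gaussianPDFReal, NNReal.coe_one, mul_one]
    refine mul_le_mul_of_nonneg_left (Real.exp_le_exp.mpr ?_) (by positivity)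
    nlinarith
  -- pointwise bound by the indicator
  have hptwise : ∀ x, g x * f ε x - g x * f 0 x ≤
      (Set.Ici (ε / 2)).indicator (fun x => f ε x - f 0 x) x := by
    intro x
    by_cases hx : x ∈ Set.Ici (ε / 2)
    · rw [Set.indicator_of_mem hx]
      have h1 : f 0 x ≤ f ε x := hge x hx
      nlinarith [hg0 x, hg1 x, gaussianPDFReal_nonneg (0:ℝ) 1 x]
    · rw [Set.indicator_of_notMem hx]
      have h1 : f ε x ≤ f 0 x := hle x (le_of_lt (by simpa using hx))
      nlinarith [hg0 x]
  have hIntInd : Integrable ((Set.Ici (ε / 2)).indicator (fun x => f ε x - f 0 x)) :=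
    ((integrable_gaussianPDFReal ε 1).sub (integrable_gaussianPDFReal 0 1)).indicator
      measurableSet_Ici
  have step1 : (∫ x, (g x * f ε x - g x * f 0 x)) ≤
      ∫ x, (Set.Ici (ε / 2)).indicator (fun x => f ε x - f 0 x) x :=
    integral_mono ((hInt ε).sub (hInt 0)) hIntInd hptwise
  refine step1.trans ?_
  rw [integral_indicator measurableSet_Ici,
    integral_sub ((integrable_gaussianPDFReal ε 1).integrableOn)
      ((integrable_gaussianPDFReal 0 1).integrableOn)]
  -- translate the first integral
  have htrans : (∫ x in Set.Ici (ε / 2), f ε x) = ∫ x in Set.Ici (-(ε / 2)), f 0 x := by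
    have h1 : ∀ x : ℝ, f ε x = f 0 (x - ε) := by
      intro x; rw [hf]; simp [gaussianPDFReal_sub]
    simp_rw [h1]
    rw [← integral_indicator measurableSet_Ici, ← integral_indicator measurableSet_Ici]
    have h2 : ∀ x : ℝ, (Set.Ici (ε / 2)).indicator (fun x => f 0 (x - ε)) x
        = (Set.Ici (-(ε / 2))).indicator (f 0) (x - ε) := by
      intro x
      have hmem : x ∈ Set.Ici (ε / 2) ↔ x - ε ∈ Set.Ici (-(ε / 2)) := by
        simp only [Set.mem_Ici]; constructor <;> intro h <;> linarith
      by_cases hx : x ∈ Set.Ici (ε / 2)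
      · rw [Set.indicator_of_mem hx, Set.indicator_of_mem (hmem.mp hx)]
      · rw [Set.indicator_of_notMem hx, Set.indicator_of_notMem (fun h => hx (hmem.mpr h))]
    simp_rw [h2]
    exact integral_sub_right_eq_self (μ := volume)
      (fun x => (Set.Ici (-(ε / 2))).indicator (f 0) x) ε
  rw [htrans]
  -- difference of the two half-line integrals is an integral over Ico
  have hdisj : Disjoint (Set.Ico (-(ε / 2)) (ε / 2)) (Set.Ici (ε / 2)) :=
    Set.disjoint_left.mpr fun x hx h2 => absurd hx.2 (not_lt.mpr h2)
  have hsplit : (∫ x in Set.Ici (-(ε / 2)), f 0 x)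
      = (∫ x in Set.Ico (-(ε / 2)) (ε / 2), f 0 x) + ∫ x in Set.Ici (ε / 2), f 0 x := by
    rw [← setIntegral_union hdisj measurableSet_Ici
      ((integrable_gaussianPDFReal 0 1).integrableOn)
      ((integrable_gaussianPDFReal 0 1).integrableOn),
      Set.Ico_union_Ici_eq_Ici (by linarith)]
  rw [hsplit, add_sub_cancel_right]
  -- bound the integral over Ico by ε / √(2π)
  have hbound : (∫ x in Set.Ico (-(ε / 2)) (ε / 2), f 0 x) ≤ (Real.sqrt (2 * π))⁻¹ * ε := by
    have hC : ∀ x ∈ Set.Ico (-(ε / 2)) (ε / 2), ‖f 0 x‖ ≤ (Real.sqrt (2 * π))⁻¹ := by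
      intro x _
      rw [Real.norm_eq_abs, abs_of_nonneg (gaussianPDFReal_nonneg 0 1 x)]
      show gaussianPDFReal 0 1 x ≤ (Real.sqrt (2 * π))⁻¹
      simp only [gaussianPDFReal, NNReal.coe_one, mul_one]
      nth_rewrite 2 [← mul_one (Real.sqrt (2 * π))⁻¹]
      refine mul_le_mul_of_nonneg_left ?_ (by positivity)
      exact Real.exp_le_one_iff.mpr (by nlinarith [sq_nonneg (x - 0)])
    have h := norm_setIntegral_le_of_norm_le_const (μ := volume)
      (s := Set.Ico (-(ε / 2)) (ε / 2)) (f := f 0) (C := (Real.sqrt (2 * π))⁻¹)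
      (by rw [Real.volume_Ico]; exact ENNReal.ofReal_lt_top) hC
    have hvol : (volume (Set.Ico (-(ε / 2)) (ε / 2))).toReal = ε := by
      rw [Real.volume_Ico, ENNReal.toReal_ofReal (by linarith)]; ring
    rw [measureReal_def, hvol] at h
    exact (le_abs_self _).trans h
  refine hbound.trans ?_
  -- ε / √(2π) ≤ ε / √2
  rw [div_eq_mul_inv, mul_comm]
  refine mul_le_mul_of_nonneg_left ?_ (le_of_lt hε)
  rw [inv_le_inv₀ (by positivity) (by positivity)]
  exact Real.sqrt_le_sqrt (by nlinarith [Real.pi_gt_three])
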